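/- Let Y^(1),…,Y^(N) be multi-object trajectories with L = Σ_{n=1}^N |Y^(n)| ≥ 1, and assume κ(L, m) = κ̄(L) > 0 for every m ≤ L. Let Ȳ = Y^(1) ⊎ ⋯ ⊎ Y^(N) be their multiset sum, so |Ȳ| = L. Then the Fréchet cost of Ȳ satisfies Σ_{n=1}^N d(Ȳ, Y^(n))^r ≤ (N−1) p^r L / κ̄(L). -/

import Mathlib

open scoped BigOperators

/-- A trajectory on the time window `{1,…,K}` (modeled as `Fin K`): a domain together
with a state map (values outside the domain are irrelevant). -/
structure Traj (K : ℕ) (X : Type*) where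
  dom : Finset (Fin K)
  toFun : Fin K → X

/-- Per-time cost `e_{u,v}(k)` with base metric cut off at `c`. -/
noncomputable def ecost {K : ℕ} {X : Type*} [MetricSpace X] (c : ℝ) (u v : Traj K X)
    (k : Fin K) : ℝ :=
  if k ∈ u.dom ∩ v.dom then min (dist (u.toFun k) (v.toFun k)) c
  else if k ∈ u.dom ∪ v.dom then c
  else 0

/-- OSPA trajectory distance of order `r` and cut-off `c`. -/
noncomputable def dT {K : ℕ} {X : Type*} [MetricSpace X] (c r : ℝ) (u v : Traj K X) : ℝ :=
  if u.dom ∪ v.dom = ∅ then 0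
  else ((∑ k ∈ u.dom ∪ v.dom, ecost c u v k ^ r) / ((u.dom ∪ v.dom).card : ℝ)) ^ (1 / r)

/-- OSPA-based multi-object trajectory distance of order `r`, cardinality penalty `p`,
cut-off `c` and normalization `κ`. -/
noncomputable def dMOT {K : ℕ} {X : Type*} [MetricSpace X] (κ : ℕ → ℕ → ℝ)
    (p c r : ℝ) (A B : Multiset (Traj K X)) : ℝ :=
  (sInf { q : ℝ | ∃ l : List (Traj K X × Traj K X),
      (↑(l.map Prod.fst) : Multiset (Traj K X)) = (if A.card ≤ B.card then A else B) ∧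
      (↑(l.map Prod.snd) : Multiset (Traj K X)) ≤ (if A.card ≤ B.card then B else A) ∧
      q = ((l.map fun e => dT c r e.1 e.2 ^ r).sum
            + ((max A.card B.card - min A.card B.card : ℕ) : ℝ) * p ^ r)
          / κ (max A.card B.card) (min A.card B.card) }) ^ (1 / r)

lemma ecost_nonneg {K : ℕ} {X : Type*} [MetricSpace X] {c : ℝ} (hc : 0 ≤ c)
    (u v : Traj K X) (k : Fin K) : 0 ≤ ecost c u v k := by
  unfold ecost
  split
  · exact le_min dist_nonneg hc
  · split
    · exact hc
    · exact le_refl 0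

lemma dT_nonneg {K : ℕ} {X : Type*} [MetricSpace X] {c r : ℝ} (hc : 0 ≤ c)
    (u v : Traj K X) : 0 ≤ dT c r u v := by
  unfold dT
  split
  · exact le_refl 0
  · apply Real.rpow_nonneg
    apply div_nonneg _ (Nat.cast_nonneg _)
    exact Finset.sum_nonneg fun k _ => Real.rpow_nonneg (ecost_nonneg hc u v k) r

lemma dT_self {K : ℕ} {X : Type*} [MetricSpace X] {c r : ℝ} (hc : 0 < c) (hr : 1 ≤ r)
    (u : Traj K X) : dT c r u u = 0 := by
  have hr0 : r ≠ 0 := by linarith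
  unfold dT
  split
  · rfl
  · have hsum : ∑ k ∈ u.dom ∪ u.dom, ecost c u u k ^ r = 0 := by
      apply Finset.sum_eq_zero
      intro k hk
      have hk' : k ∈ u.dom := by simpa using hk
      have h0 : ecost c u u k = 0 := by
        unfold ecost
        simp [hk', dist_self, min_eq_left hc.le]
      rw [h0, Real.zero_rpow hr0]
    rw [hsum, zero_div, Real.zero_rpow (one_div_ne_zero hr0)]

/-- The multiset sum `Ȳ = Y^(1) ⊎ ⋯ ⊎ Y^(N)` has Fréchet cost at most
`(N−1) p^r L / κ̄(L)`. -/
theorem multiset_sum_frechet_cost_bound {K N : ℕ} {X : Type*} [MetricSpace X]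
    (hK : 1 ≤ K) (hN : 1 ≤ N) {c r p : ℝ} (hc : 0 < c) (hr : 1 ≤ r) (hp : 0 ≤ p)
    (κ : ℕ → ℕ → ℝ) (hκpos : ∀ s m, 0 < κ s m) (hκsym : ∀ s m, κ s m = κ m s)
    (Y : Fin N → Multiset (Traj K X)) (L : ℕ) (hL : L = ∑ n, (Y n).card) (hL1 : 1 ≤ L)
    (κbar : ℝ) (hκbar : ∀ m ≤ L, κ L m = κbar) :
    ∑ n, dMOT κ p c r (∑ m, Y m) (Y n) ^ r
      ≤ ((N : ℝ) - 1) * p ^ r * (L : ℝ) / κbar := by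
  have hr0 : r ≠ 0 := by linarith
  have hpr : (0:ℝ) ≤ p ^ r := Real.rpow_nonneg hp r
  have hκb : 0 < κbar := by rw [← hκbar L le_rfl]; exact hκpos L L
  set S : Multiset (Traj K X) := ∑ m, Y m with hS
  have hcardS : S.card = L := by
    rw [hS, hL]
    induction (Finset.univ : Finset (Fin N)) using Finset.induction with
    | empty => simp
    | insert _ _ h ih => simp [Finset.sum_insert h, Multiset.card_add, ih]
  have hkey : ∀ n, dMOT κ p c r S (Y n) ^ r ≤ ((L - (Y n).card : ℕ) : ℝ) * p ^ r / κbar := by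
    intro n
    have hle : Y n ≤ S := Finset.single_le_sum (f := Y) (fun i _ => Multiset.zero_le _)
      (Finset.mem_univ n)
    have hcle : (Y n).card ≤ L := by rw [← hcardS]; exact Multiset.card_le_card hle
    set Sset := { q : ℝ | ∃ l : List (Traj K X × Traj K X),
      (↑(l.map Prod.fst) : Multiset (Traj K X)) = (if S.card ≤ (Y n).card then S else Y n) ∧
      (↑(l.map Prod.snd) : Multiset (Traj K X)) ≤ (if S.card ≤ (Y n).card then Y n else S) ∧
      q = ((l.map fun e => dT c r e.1 e.2 ^ r).sum
            + ((max S.card (Y n).card - min S.card (Y n).card : ℕ) : ℝ) * p ^ r)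
          / κ (max S.card (Y n).card) (min S.card (Y n).card) } with hSset
    have hM : (if S.card ≤ (Y n).card then S else Y n) = Y n := by
      split
      · next h =>
        have : S.card ≤ (Y n).card := h
        exact (Multiset.eq_of_le_of_card_le hle this).symm
      · rfl
    have hmax : max S.card (Y n).card = L := by
      rw [hcardS]; exact max_eq_left hcle
    have hmin : min S.card (Y n).card = (Y n).card := by
      rw [hcardS]; exact min_eq_right hcle
    -- witness list
    set l : List (Traj K X × Traj K X) := (Y n).toList.map (fun y => (y, y)) with hl
    have hfst : (↑(l.map Prod.fst) : Multiset (Traj K X)) = Y n := by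
      rw [hl, List.map_map]
      have h1 : (Prod.fst ∘ fun y : Traj K X => (y, y)) = id := rfl
      rw [h1, List.map_id, Multiset.coe_toList]
    have hsnd : (↑(l.map Prod.snd) : Multiset (Traj K X)) = Y n := by
      rw [hl, List.map_map]
      have h1 : (Prod.snd ∘ fun y : Traj K X => (y, y)) = id := rfl
      rw [h1, List.map_id, Multiset.coe_toList]
    have hsum0 : (l.map fun e => dT c r e.1 e.2 ^ r).sum = 0 := by
      apply List.sum_eq_zero
      intro x hx
      rw [hl, List.map_map] at hx
      obtain ⟨y, -, hy⟩ := List.mem_map.mp hx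
      rw [← hy]
      simp [Function.comp, dT_self hc hr, Real.zero_rpow hr0]
    have hq : (((L - (Y n).card : ℕ) : ℝ) * p ^ r / κbar) ∈ Sset := by
      refine ⟨l, ?_, ?_, ?_⟩
      · rw [hfst, hM]
      · rw [hsnd]
        split
        · exact le_rfl
        · exact hle
      · rw [hsum0, hmax, hmin, hκbar _ hcle, zero_add]
    have hnn : ∀ q ∈ Sset, 0 ≤ q := by
      intro q hq
      obtain ⟨l', -, -, hq'⟩ := hq
      rw [hq']
      apply div_nonneg _ (hκpos _ _).le
      apply add_nonneg _ (mul_nonneg (Nat.cast_nonneg _) hpr)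
      apply List.sum_nonneg
      intro x hx
      obtain ⟨e, -, he⟩ := List.mem_map.mp hx
      rw [← he]
      exact Real.rpow_nonneg (dT_nonneg hc.le _ _) r
    have hbdd : BddBelow Sset := ⟨0, hnn⟩
    have hinf_le : sInf Sset ≤ ((L - (Y n).card : ℕ) : ℝ) * p ^ r / κbar :=
      csInf_le hbdd hq
    have hinf_nonneg : 0 ≤ sInf Sset := Real.sInf_nonneg hnn
    calc dMOT κ p c r S (Y n) ^ r = sInf Sset := by
          rw [dMOT, ← hSset, ← Real.rpow_mul hinf_nonneg, one_div_mul_cancel hr0,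
            Real.rpow_one]
      _ ≤ _ := hinf_le
  have hcards : ∀ n, (Y n).card ≤ L := by
    intro n
    rw [hL]
    exact Finset.single_le_sum (f := fun m => (Y m).card) (fun i _ => Nat.zero_le _)
      (Finset.mem_univ n)
  calc ∑ n, dMOT κ p c r S (Y n) ^ r
      ≤ ∑ n, ((L - (Y n).card : ℕ) : ℝ) * p ^ r / κbar :=
        Finset.sum_le_sum fun n _ => hkey n
    _ = (∑ n, ((L : ℝ) - ((Y n).card : ℝ))) * p ^ r / κbar := by
        rw [← Finset.sum_div, ← Finset.sum_mul]
        congr 2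
        exact Finset.sum_congr rfl fun n _ => Nat.cast_sub (hcards n)
    _ = ((N : ℝ) - 1) * p ^ r * (L : ℝ) / κbar := by
        have h1 : ∑ n : Fin N, (((Y n).card : ℕ) : ℝ) = (L : ℝ) := by
          rw [hL]; push_cast; rfl
        rw [Finset.sum_sub_distrib, Finset.sum_const, Finset.card_univ, Fintype.card_fin,
          h1, nsmul_eq_mul]
        ring
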